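/- Let G be a dense, K_4^3 ∪ e-free 3-graph with λ(G) > √3/18, and let x be an optimum weight vector for G. Then for any two distinct vertices a and b of G, x_a + x_b ≤ (3 − √3)/3. -/

import Mathlib

open Finset

/-- An `r`-uniform hypergraph (r-graph) with vertices drawn from `ℕ`. -/
structure HyperGraph (r : ℕ) where
  verts : Finset ℕ
  edges : Finset (Finset ℕ)
  edges_sub : ∀ e ∈ edges, e ⊆ verts
  card_eq : ∀ e ∈ edges, e.card = r

/-- A 3-uniform hypergraph (3-graph). -/
abbrev ThreeGraph := HyperGraph 3

/-- A feasible weight vector on `G`: nonnegative weights on the vertices summing to 1. -/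
def HyperGraph.IsFeasible {r : ℕ} (G : HyperGraph r) (w : ℕ → ℝ) : Prop :=
  (∀ v ∈ G.verts, 0 ≤ w v) ∧ ∑ v ∈ G.verts, w v = 1

/-- The Lagrangian function `λ(G, w) = Σ_{e ∈ E(G)} Π_{v ∈ e} w v`. -/
noncomputable def HyperGraph.lagFun {r : ℕ} (G : HyperGraph r) (w : ℕ → ℝ) : ℝ :=
  ∑ e ∈ G.edges, ∏ v ∈ e, w v

/-- The Lagrangian `λ(G)`: the maximum of `λ(G, w)` over feasible weight vectors. -/
noncomputable def HyperGraph.lag {r : ℕ} (G : HyperGraph r) : ℝ :=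
  sSup {x : ℝ | ∃ w, G.IsFeasible w ∧ G.lagFun w = x}

/-- `G` contains a copy of `F`: an injection of the vertices of `F` into those of `G`
mapping every edge of `F` to an edge of `G`. -/
def HyperGraph.ContainsCopy {r : ℕ} (G F : HyperGraph r) : Prop :=
  ∃ f : ℕ → ℕ, Set.InjOn f ↑F.verts ∧ (∀ v ∈ F.verts, f v ∈ G.verts) ∧
    ∀ e ∈ F.edges, e.image f ∈ G.edges

/-- `G` is `F`-free. -/
def HyperGraph.Free {r : ℕ} (G F : HyperGraph r) : Prop := ¬ G.ContainsCopy F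

/-- `H` is a subgraph of `G`. -/
def HyperGraph.IsSubgraph {r : ℕ} (H G : HyperGraph r) : Prop :=
  H.verts ⊆ G.verts ∧ H.edges ⊆ G.edges

/-- `G` is dense: every proper subgraph has strictly smaller Lagrangian. -/
def HyperGraph.LagDense {r : ℕ} (G : HyperGraph r) : Prop :=
  ∀ H : HyperGraph r, H.IsSubgraph G → (H.verts ≠ G.verts ∨ H.edges ≠ G.edges) →
    H.lag < G.lag

/-- The Lagrangian density `π_λ(F) = sup { r! · λ(G) : G is F-free }`. -/
noncomputable def lagDensity {r : ℕ} (F : HyperGraph r) : ℝ :=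
  sSup {x : ℝ | ∃ G : HyperGraph r, G.Free F ∧ x = (Nat.factorial r : ℝ) * G.lag}

/-- An optimum weight vector for `G`. -/
def HyperGraph.IsOptimal {r : ℕ} (G : HyperGraph r) (w : ℕ → ℝ) : Prop :=
  G.IsFeasible w ∧ G.lagFun w = G.lag

/-- `K_4^3 ∪ e`: the disjoint union of the complete 3-graph on `{1,2,3,4}`
and the single edge `{5,6,7}`. -/
def K43e : ThreeGraph where
  verts := {1, 2, 3, 4, 5, 6, 7}
  edges := {{1, 2, 3}, {1, 2, 4}, {1, 3, 4}, {2, 3, 4}, {5, 6, 7}}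
  edges_sub := by decide
  card_eq := by decide

-- ====== auxiliary development ======

noncomputable def glink {r : ℕ} (G : HyperGraph r) (x : ℕ → ℝ) (v : ℕ) : ℝ :=
  ∑ e ∈ G.edges, if v ∈ e then ∏ w ∈ e.erase v, x w else 0

lemma lagFun_le_card {r : ℕ} (G : HyperGraph r) (w : ℕ → ℝ) (hw : G.IsFeasible w) :
    G.lagFun w ≤ (G.edges.card : ℝ) := by
  unfold HyperGraph.lagFun
  calc ∑ e ∈ G.edges, ∏ v ∈ e, w v ≤ ∑ _e ∈ G.edges, (1 : ℝ) := by
        apply Finset.sum_le_sum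
        intro e he
        apply Finset.prod_le_one
        · intro v hv; exact hw.1 v (G.edges_sub e he hv)
        · intro v hv
          have h1 : w v ≤ ∑ u ∈ G.verts, w u :=
            Finset.single_le_sum (fun u hu => hw.1 u hu) (G.edges_sub e he hv)
          rw [hw.2] at h1; exact h1
    _ = (G.edges.card : ℝ) := by simp

lemma le_lag {r : ℕ} (G : HyperGraph r) (w : ℕ → ℝ) (hw : G.IsFeasible w) :
    G.lagFun w ≤ G.lag := by
  apply le_csSup
  · exact ⟨(G.edges.card : ℝ), fun t ht => by
      obtain ⟨w', hw', hwt⟩ := ht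
      exact hwt ▸ lagFun_le_card G w' hw'⟩
  · exact ⟨w, hw, rfl⟩

lemma pos_of_dense {r : ℕ} (G : HyperGraph r) (hd : G.LagDense) (x : ℕ → ℝ)
    (hx : G.IsOptimal x) {v : ℕ} (hv : v ∈ G.verts) : 0 < x v := by
  classical
  rcases (hx.1.1 v hv).lt_or_eq with h | h
  · exact h
  exfalso
  have hv0 : x v = 0 := h.symm
  set H : HyperGraph r :=
    ⟨G.verts.erase v, G.edges.filter (fun e => v ∉ e),
      fun e he => by
        have h1 := Finset.mem_filter.1 he
        intro w hw
        exact Finset.mem_erase.2 ⟨fun hwv => h1.2 (hwv ▸ hw), G.edges_sub e h1.1 hw⟩,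
      fun e he => G.card_eq e (Finset.mem_filter.1 he).1⟩ with hH
  have hsub : H.IsSubgraph G := ⟨Finset.erase_subset _ _, Finset.filter_subset _ _⟩
  have hne : H.verts ≠ G.verts := by
    intro hEq
    apply Finset.notMem_erase v G.verts
    rw [show G.verts.erase v = H.verts from rfl, hEq]
    exact hv
  have hlt := hd H hsub (Or.inl hne)
  have hfeas : H.IsFeasible x := by
    constructor
    · intro w hw; exact hx.1.1 w (Finset.mem_of_mem_erase hw)
    · show ∑ w ∈ G.verts.erase v, x w = 1
      rw [Finset.sum_erase _ hv0]; exact hx.1.2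
  have heq : H.lagFun x = G.lagFun x := by
    show ∑ e ∈ G.edges.filter (fun e => v ∉ e), ∏ u ∈ e, x u = ∑ e ∈ G.edges, ∏ u ∈ e, x u
    rw [← Finset.sum_filter_add_sum_filter_not G.edges (fun e => v ∉ e)]
    have : ∑ e ∈ G.edges.filter (fun e => ¬ v ∉ e), ∏ u ∈ e, x u = 0 := by
      apply Finset.sum_eq_zero
      intro e he
      have hve : v ∈ e := not_not.1 (Finset.mem_filter.1 he).2
      exact Finset.prod_eq_zero hve hv0
    rw [this, add_zero]
  have hge : G.lag ≤ H.lag := by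
    rw [← hx.2, ← heq]; exact le_lag H x hfeas
  linarith

lemma erase_erase_comm (s : Finset ℕ) (a b : ℕ) :
    (s.erase a).erase b = (s.erase b).erase a := by
  ext w; simp only [Finset.mem_erase]; tauto

lemma prod_perturb (x : ℕ → ℝ) (ε : ℝ) {u i : ℕ} (hui : u ≠ i) (e : Finset ℕ) :
    ∏ v ∈ e, (x v + (if v = u then ε else 0) - (if v = i then ε else 0)) =
    ∏ v ∈ e, x v
      + ε * ((if u ∈ e then ∏ w ∈ e.erase u, x w else 0)
           - (if i ∈ e then ∏ w ∈ e.erase i, x w else 0))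
      - ε ^ 2 * (if u ∈ e ∧ i ∈ e then ∏ w ∈ (e.erase u).erase i, x w else 0) := by
  classical
  set y : ℕ → ℝ := fun v => x v + (if v = u then ε else 0) - (if v = i then ε else 0) with hy
  have hyu : y u = x u + ε := by simp [hy, hui]
  have hyi : y i = x i - ε := by simp [hy, Ne.symm hui]
  by_cases hu : u ∈ e <;> by_cases hi : i ∈ e
  · have hie : i ∈ e.erase u := Finset.mem_erase.2 ⟨Ne.symm hui, hi⟩
    have hkey : ∀ w ∈ (e.erase u).erase i, y w = x w := by
      intro w hw
      have hwi : w ≠ i := (Finset.mem_erase.1 hw).1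
      have hwu : w ≠ u := (Finset.mem_erase.1 (Finset.mem_of_mem_erase hw)).1
      simp [hy, hwi, hwu]
    have h1 : ∏ v ∈ e, y v = (x u + ε) * ((x i - ε) * ∏ w ∈ (e.erase u).erase i, x w) := by
      rw [← Finset.mul_prod_erase e y hu, ← Finset.mul_prod_erase _ y hie, hyu, hyi,
        Finset.prod_congr rfl hkey]
    have h2 : ∏ v ∈ e, x v = x u * (x i * ∏ w ∈ (e.erase u).erase i, x w) := by
      rw [← Finset.mul_prod_erase e x hu, ← Finset.mul_prod_erase _ x hie]
    have h3 : ∏ w ∈ e.erase u, x w = x i * ∏ w ∈ (e.erase u).erase i, x w :=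
      (Finset.mul_prod_erase _ x hie).symm
    have hue : u ∈ e.erase i := Finset.mem_erase.2 ⟨hui, hu⟩
    have h4 : ∏ w ∈ e.erase i, x w = x u * ∏ w ∈ (e.erase u).erase i, x w := by
      rw [← Finset.mul_prod_erase _ x hue, erase_erase_comm e i u]
    rw [h1, if_pos hu, if_pos hi, if_pos ⟨hu, hi⟩, h2, h3, h4]
    ring
  · have hkey : ∀ w ∈ e.erase u, y w = x w := by
      intro w hw
      have hwu : w ≠ u := (Finset.mem_erase.1 hw).1
      have hwi : w ≠ i := fun h => hi (h ▸ Finset.mem_of_mem_erase hw)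
      simp [hy, hwu, hwi]
    have h1 : ∏ v ∈ e, y v = (x u + ε) * ∏ w ∈ e.erase u, x w := by
      rw [← Finset.mul_prod_erase e y hu, hyu, Finset.prod_congr rfl hkey]
    have h2 : ∏ v ∈ e, x v = x u * ∏ w ∈ e.erase u, x w :=
      (Finset.mul_prod_erase e x hu).symm
    rw [h1, if_pos hu, if_neg hi, if_neg (fun h => hi h.2), h2]
    ring
  · have hkey : ∀ w ∈ e.erase i, y w = x w := by
      intro w hw
      have hwi : w ≠ i := (Finset.mem_erase.1 hw).1
      have hwu : w ≠ u := fun h => hu (h ▸ Finset.mem_of_mem_erase hw)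
      simp [hy, hwu, hwi]
    have h1 : ∏ v ∈ e, y v = (x i - ε) * ∏ w ∈ e.erase i, x w := by
      rw [← Finset.mul_prod_erase e y hi, hyi, Finset.prod_congr rfl hkey]
    have h2 : ∏ v ∈ e, x v = x i * ∏ w ∈ e.erase i, x w :=
      (Finset.mul_prod_erase e x hi).symm
    rw [h1, if_neg hu, if_pos hi, if_neg (fun h => hu h.1), h2]
    ring
  · have hkey : ∀ w ∈ e, y w = x w := by
      intro w hw
      have hwu : w ≠ u := fun h => hu (h ▸ hw)
      have hwi : w ≠ i := fun h => hi (h ▸ hw)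
      simp [hy, hwu, hwi]
    rw [Finset.prod_congr rfl hkey, if_neg hu, if_neg hi, if_neg (fun h => hu h.1)]
    ring

lemma lagFun_perturb {r : ℕ} (G : HyperGraph r) (x : ℕ → ℝ) (ε : ℝ) {u i : ℕ} (hui : u ≠ i) :
    G.lagFun (fun v => x v + (if v = u then ε else 0) - (if v = i then ε else 0)) =
    G.lagFun x + ε * (glink G x u - glink G x i) -
      ε ^ 2 * ∑ e ∈ G.edges, (if u ∈ e ∧ i ∈ e then ∏ w ∈ (e.erase u).erase i, x w else 0) := by
  classical
  unfold HyperGraph.lagFun glink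
  rw [Finset.sum_congr rfl (fun e _ => prod_perturb x ε hui e)]
  rw [Finset.sum_sub_distrib, Finset.sum_add_distrib, ← Finset.mul_sum, ← Finset.mul_sum,
    Finset.sum_sub_distrib]

lemma link_le_link {r : ℕ} (G : HyperGraph r) (x : ℕ → ℝ) (hx : G.IsOptimal x)
    {u i : ℕ} (hu : u ∈ G.verts) (hi : i ∈ G.verts) (hui : u ≠ i) (hipos : 0 < x i) :
    glink G x u ≤ glink G x i := by
  classical
  set Q := ∑ e ∈ G.edges, (if u ∈ e ∧ i ∈ e then ∏ w ∈ (e.erase u).erase i, x w else 0)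
    with hQdef
  have hQ : 0 ≤ Q := by
    apply Finset.sum_nonneg
    intro e he
    split
    · exact Finset.prod_nonneg fun w hw =>
        hx.1.1 w (G.edges_sub e he (Finset.mem_of_mem_erase (Finset.mem_of_mem_erase hw)))
    · exact le_refl 0
  have key : ∀ ε : ℝ, 0 < ε → ε ≤ x i → glink G x u - glink G x i ≤ ε * Q := by
    intro ε hε hεi
    set y : ℕ → ℝ := fun v => x v + (if v = u then ε else 0) - (if v = i then ε else 0) with hy
    have hyfeas : G.IsFeasible y := by
      constructor
      · intro v hv
        by_cases hvu : v = u
        · subst hvu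
          have h : y v = x v + ε := by simp [hy, hui]
          rw [h]; linarith [hx.1.1 v hv]
        · by_cases hvi : v = i
          · subst hvi
            have h : y v = x v - ε := by simp [hy, hvu]
            rw [h]; linarith
          · have h : y v = x v := by simp [hy, hvu, hvi]
            rw [h]; exact hx.1.1 v hv
      · show ∑ v ∈ G.verts, y v = 1
        have h : ∀ v ∈ G.verts,
            y v = x v + ((if v = u then ε else 0) - (if v = i then ε else 0)) := by
          intro v _; simp only [hy]; ring
        rw [Finset.sum_congr rfl h, Finset.sum_add_distrib, Finset.sum_sub_distrib,
          Finset.sum_ite_eq' G.verts u (fun _ => ε), Finset.sum_ite_eq' G.verts i (fun _ => ε),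
          if_pos hu, if_pos hi, hx.1.2]
        ring
    have hle : G.lagFun y ≤ G.lagFun x := by
      rw [hx.2]; exact le_lag G y hyfeas
    rw [show G.lagFun y =
        G.lagFun x + ε * (glink G x u - glink G x i) - ε ^ 2 * Q from lagFun_perturb G x ε hui]
      at hle
    have h2 : ε * (glink G x u - glink G x i) ≤ ε * (ε * Q) := by nlinarith
    exact le_of_mul_le_mul_left h2 hε
  by_contra hcon
  push_neg at hcon
  have hΔpos : 0 < glink G x u - glink G x i := by linarith
  set Δ := glink G x u - glink G x i with hΔ
  set ε := min (x i) (Δ / (Q + 1)) with hε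
  have hεpos : 0 < ε := lt_min hipos (div_pos hΔpos (by linarith))
  have h := key ε hεpos (min_le_left _ _)
  have h1 : ε * Q ≤ Δ / (Q + 1) * Q :=
    mul_le_mul_of_nonneg_right (min_le_right _ _) hQ
  have h2 : Δ / (Q + 1) * Q < Δ := by
    rw [div_mul_eq_mul_div, div_lt_iff₀ (by linarith : (0:ℝ) < Q + 1)]
    nlinarith
  linarith

lemma sum_link (G : ThreeGraph) (x : ℕ → ℝ) :
    ∑ v ∈ G.verts, x v * glink G x v = 3 * G.lagFun x := by
  classical
  unfold glink HyperGraph.lagFun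
  simp_rw [Finset.mul_sum, mul_ite, mul_zero]
  rw [Finset.sum_comm]
  apply Finset.sum_congr rfl
  intro e he
  rw [← Finset.sum_filter]
  have hfil : G.verts.filter (fun v => v ∈ e) = e := by
    ext v
    simp only [Finset.mem_filter]
    exact ⟨fun h => h.2, fun h => ⟨G.edges_sub e he h, h⟩⟩
  rw [hfil]
  have hterm : ∀ v ∈ e, x v * ∏ w ∈ e.erase v, x w = ∏ w ∈ e, x w :=
    fun v hv => Finset.mul_prod_erase e x hv
  rw [Finset.sum_congr rfl hterm, Finset.sum_const, G.card_eq e he]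
  simp [mul_comm]

lemma pairsum_le (x : ℕ → ℝ) :
    ∀ T : Finset ℕ, (∀ v ∈ T, 0 ≤ x v) →
      ∑ p ∈ T.powersetCard 2, ∏ v ∈ p, x v ≤ (∑ v ∈ T, x v) ^ 2 / 2 := by
  classical
  intro T
  induction T using Finset.induction_on with
  | empty =>
    intro _
    rw [Finset.powersetCard_eq_empty.2 (by simp)]
    simp
  | @insert a s ha ih =>
    intro hx
    have hxa : 0 ≤ x a := hx a (Finset.mem_insert_self a s)
    have hxs : ∀ v ∈ s, 0 ≤ x v := fun v hv => hx v (Finset.mem_insert_of_mem hv)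
    have hS : 0 ≤ ∑ v ∈ s, x v := Finset.sum_nonneg hxs
    rw [show (2:ℕ) = Nat.succ 1 from rfl, Finset.powersetCard_succ_insert ha 1]
    have hdisj : Disjoint (s.powersetCard (Nat.succ 1)) ((s.powersetCard 1).image (insert a)) := by
      rw [Finset.disjoint_left]
      intro p hp hp'
      obtain ⟨t, ht, rfl⟩ := Finset.mem_image.1 hp'
      exact ha ((Finset.mem_powersetCard.1 hp).1 (Finset.mem_insert_self a t))
    rw [Finset.sum_union hdisj]
    have hinj : ∀ t ∈ s.powersetCard 1, ∀ t' ∈ s.powersetCard 1,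
        insert a t = insert a t' → t = t' := by
      intro t ht t' ht' hEq
      have hat : a ∉ t := fun h' => ha ((Finset.mem_powersetCard.1 ht).1 h')
      have hat' : a ∉ t' := fun h' => ha ((Finset.mem_powersetCard.1 ht').1 h')
      rw [← Finset.erase_insert hat, ← Finset.erase_insert hat', hEq]
    rw [Finset.sum_image hinj]
    have himg : ∑ t ∈ s.powersetCard 1, ∏ v ∈ insert a t, x v = x a * ∑ v ∈ s, x v := by
      have h1 : ∀ t ∈ s.powersetCard 1, ∏ v ∈ insert a t, x v = x a * ∏ v ∈ t, x v := by
        intro t ht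
        exact Finset.prod_insert (fun h' => ha ((Finset.mem_powersetCard.1 ht).1 h'))
      rw [Finset.sum_congr rfl h1, Finset.powersetCard_one, Finset.sum_map, Finset.mul_sum]
      apply Finset.sum_congr rfl
      intro w _
      simp
    rw [himg, Finset.sum_insert ha]
    have hih := ih hxs
    nlinarith [hih, hxa, hS]

lemma link_bound (G : ThreeGraph) (x : ℕ → ℝ) (hx : G.IsFeasible x)
    {a b : ℕ} (ha : a ∈ G.verts) (hb : b ∈ G.verts) (hab : a ≠ b) :
    glink G x a ≤ x b * (1 - x a - x b) + (1 - x a - x b) ^ 2 / 2 ∧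
      0 ≤ 1 - x a - x b := by
  classical
  set T := (G.verts.erase a).erase b with hT
  have hbT : b ∉ T := Finset.notMem_erase _ _
  have hbV : b ∈ G.verts.erase a := Finset.mem_erase.2 ⟨Ne.symm hab, hb⟩
  have hr : ∑ v ∈ T, x v = 1 - x a - x b := by
    have h1 : ∑ v ∈ G.verts.erase a, x v = 1 - x a := by
      have h := Finset.add_sum_erase G.verts x ha
      rw [hx.2] at h; linarith
    have h2 := Finset.add_sum_erase (G.verts.erase a) x hbV
    rw [h1] at h2; rw [hT]; linarith
  have hTnn : ∀ v ∈ T, 0 ≤ x v := fun v hv =>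
    hx.1 v (Finset.mem_of_mem_erase (Finset.mem_of_mem_erase hv))
  have hrnn : 0 ≤ 1 - x a - x b := hr ▸ Finset.sum_nonneg hTnn
  refine ⟨?_, hrnn⟩
  -- rewrite the link as a sum over a set of pairs
  set S := (G.edges.filter (fun e => a ∈ e)).image (fun e => e.erase a) with hS
  have hinj : ∀ e ∈ G.edges.filter (fun e => a ∈ e), ∀ e' ∈ G.edges.filter (fun e => a ∈ e),
      e.erase a = e'.erase a → e = e' := by
    intro e he e' he' hEq
    have hae : a ∈ e := (Finset.mem_filter.1 he).2
    have hae' : a ∈ e' := (Finset.mem_filter.1 he').2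
    rw [← Finset.insert_erase hae, ← Finset.insert_erase hae', hEq]
  have hlink : glink G x a = ∑ p ∈ S, ∏ v ∈ p, x v := by
    rw [hS, Finset.sum_image hinj]
    unfold glink
    rw [← Finset.sum_filter]
  have hScard : ∀ p ∈ S, p.card = 2 ∧ p ⊆ G.verts.erase a := by
    intro p hp
    obtain ⟨e, he, rfl⟩ := Finset.mem_image.1 hp
    have he' := Finset.mem_filter.1 he
    constructor
    · rw [Finset.card_erase_of_mem he'.2, G.card_eq e he'.1]
    · exact Finset.erase_subset_erase a (G.edges_sub e he'.1)
  have hSnn : ∀ p ∈ S, 0 ≤ ∏ v ∈ p, x v := by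
    intro p hp
    exact Finset.prod_nonneg fun v hv => hx.1 v
      (Finset.mem_of_mem_erase ((hScard p hp).2 hv))
  -- split according to whether the pair contains b
  rw [hlink, ← Finset.sum_filter_add_sum_filter_not S (fun p => b ∈ p)]
  have part1 : ∑ p ∈ S.filter (fun p => b ∈ p), ∏ v ∈ p, x v ≤ x b * (1 - x a - x b) := by
    have hsub : S.filter (fun p => b ∈ p) ⊆ T.image (fun w => insert b {w}) := by
      intro p hp
      have hp1 := Finset.mem_filter.1 hp
      obtain ⟨hcard, hsubV⟩ := hScard p hp1.1
      have hbe : b ∈ p := hp1.2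
      have hcard1 : (p.erase b).card = 1 := by
        rw [Finset.card_erase_of_mem hbe, hcard]
      obtain ⟨w, hw⟩ := Finset.card_eq_one.1 hcard1
      have hwp : w ∈ p.erase b := by rw [hw]; exact Finset.mem_singleton_self w
      have hwT : w ∈ T := Finset.mem_erase.2 ⟨(Finset.mem_erase.1 hwp).1,
        hsubV (Finset.mem_of_mem_erase hwp)⟩
      refine Finset.mem_image.2 ⟨w, hwT, ?_⟩
      rw [← Finset.insert_erase hbe, hw]
    calc ∑ p ∈ S.filter (fun p => b ∈ p), ∏ v ∈ p, x v
        ≤ ∑ p ∈ T.image (fun w => insert b {w}), ∏ v ∈ p, x v := by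
          apply Finset.sum_le_sum_of_subset_of_nonneg hsub
          intro p hp _
          obtain ⟨w, hw, rfl⟩ := Finset.mem_image.1 hp
          apply Finset.prod_nonneg
          intro v hv
          rcases Finset.mem_insert.1 hv with h | h
          · exact h ▸ hx.1 b hb
          · rw [Finset.mem_singleton.1 h]; exact hTnn w hw
      _ = ∑ w ∈ T, x b * x w := by
          rw [Finset.sum_image]
          · apply Finset.sum_congr rfl
            intro w hw
            rw [Finset.prod_insert (by
              simp only [Finset.mem_singleton]
              exact fun h => hbT (h ▸ hw)), Finset.prod_singleton]
          · intro w hw w' hw' hEq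
            have : w ∈ insert b ({w'} : Finset ℕ) := by
              rw [← show insert b ({w} : Finset ℕ) = insert b {w'} from hEq]; exact Finset.mem_insert_of_mem (Finset.mem_singleton_self w)
            rcases Finset.mem_insert.1 this with h | h
            · exact absurd (h ▸ hw) hbT
            · exact Finset.mem_singleton.1 h
      _ = x b * (1 - x a - x b) := by rw [← Finset.mul_sum, hr]
  have part2 : ∑ p ∈ S.filter (fun p => b ∉ p), ∏ v ∈ p, x v ≤ (1 - x a - x b) ^ 2 / 2 := by
    have hsub : S.filter (fun p => b ∉ p) ⊆ T.powersetCard 2 := by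
      intro p hp
      have hp1 := Finset.mem_filter.1 hp
      obtain ⟨hcard, hsubV⟩ := hScard p hp1.1
      refine Finset.mem_powersetCard.2 ⟨?_, hcard⟩
      intro v hv
      exact Finset.mem_erase.2 ⟨fun h => hp1.2 (h ▸ hv), hsubV hv⟩
    calc ∑ p ∈ S.filter (fun p => b ∉ p), ∏ v ∈ p, x v
        ≤ ∑ p ∈ T.powersetCard 2, ∏ v ∈ p, x v := by
          apply Finset.sum_le_sum_of_subset_of_nonneg hsub
          intro p hp _
          exact Finset.prod_nonneg fun v hv =>
            hTnn v ((Finset.mem_powersetCard.1 hp).1 hv)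
      _ ≤ (∑ v ∈ T, x v) ^ 2 / 2 := pairsum_le x T hTnn
      _ = (1 - x a - x b) ^ 2 / 2 := by rw [hr]
  linarith

lemma main_aux (G : ThreeGraph) (hdense : G.LagDense)
    (hlag : Real.sqrt 3 / 18 < G.lag) (x : ℕ → ℝ) (hx : G.IsOptimal x)
    (a b : ℕ) (ha : a ∈ G.verts) (hb : b ∈ G.verts) (hab : a ≠ b) (hba : x b ≤ x a) :
    x a + x b ≤ (3 - Real.sqrt 3) / 3 := by
  have hapos : 0 < x a := pos_of_dense G hdense x hx ha
  have hlink_ge : 3 * G.lag ≤ glink G x a := by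
    have h1 : ∀ v ∈ G.verts, x v * glink G x v ≤ x v * glink G x a := by
      intro v hv
      by_cases hva : v = a
      · subst hva; exact le_refl _
      · exact mul_le_mul_of_nonneg_left (link_le_link G x hx hv ha hva hapos) (hx.1.1 v hv)
    have h2 : ∑ v ∈ G.verts, x v * glink G x v ≤ ∑ v ∈ G.verts, x v * glink G x a :=
      Finset.sum_le_sum h1
    rw [sum_link G x, hx.2, ← Finset.sum_mul, hx.1.2, one_mul] at h2
    exact h2
  obtain ⟨hub, hrnn⟩ := link_bound G x hx.1 ha hb hab
  have hbnn : 0 ≤ x b := hx.1.1 b hb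
  have h6 : 6 * G.lag ≤ 1 - (x a + x b) := by nlinarith
  have hs3 : Real.sqrt 3 / 3 = 6 * (Real.sqrt 3 / 18) := by ring
  linarith

/-- For a dense `K_4^3 ∪ e`-free 3-graph `G` with `λ(G) > √3/18` and an optimum
weight vector `x`, any two distinct vertices `a, b` satisfy
`x a + x b ≤ (3 − √3)/3`. -/
theorem weight_pair_bound (G : ThreeGraph) (hdense : G.LagDense) (hfree : G.Free K43e)
    (hlag : Real.sqrt 3 / 18 < G.lag) (x : ℕ → ℝ) (hx : G.IsOptimal x)
    (a b : ℕ) (ha : a ∈ G.verts) (hb : b ∈ G.verts) (hab : a ≠ b) :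
    x a + x b ≤ (3 - Real.sqrt 3) / 3 := by
  rcases le_total (x b) (x a) with h | h
  · exact main_aux G hdense hlag x hx a b ha hb hab h
  · rw [add_comm]
    exact main_aux G hdense hlag x hx b a hb ha hab.symm h
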